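/- Let F be a field of characteristic 3. For every permitted coloring of ∂Δ⁵, the alternating cocycle sum of the polynomial c(a,b,c,d,e) = e²+2d²+2bd+ad+c²+bc+2ac vanishes: Σ_{i=1}^{6} (−1)^{i−1} c[u_i] = 0 in F, where u_i = {1,…,6}∖{i}. -/

import Mathlib

open Finset

/-- The 5×5 integer matrix 𝓡. -/
def Rmat : Matrix (Fin 5) (Fin 5) ℤ :=
  !![0, -2, 1, 1, -2;
     0, -1, 0, 1, -1;
     -1, 2, -2, 0, 1;
     -1, 3, -2, -1, 2;
     0, 1, -1, 0, 0]

/-- The table of 2-columns ψ for a tetrahedron with (sorted) vertices indexed by `Fin 4`: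
for indices a < c, the value of ψ on the edge joining the a-th and the c-th vertex. -/
def psiPair (F : Type*) [Field F] (a c : Fin 4) : F × F :=
  if a = 0 ∧ c = 1 then (-1, 1)
  else if a = 0 ∧ c = 2 then (2, -1)
  else if a = 0 ∧ c = 3 then (-1, 0)
  else if a = 1 ∧ c = 2 then (-1, 0)
  else if a = 1 ∧ c = 3 then (0, 1)
  else if a = 2 ∧ c = 3 then (1, -1)
  else (0, 0)

/-- ψ_{t,b} for a tetrahedron `t` (a 4-element subset of the vertex set) and an edge `b`:
zero when `b ⊄ t`, and the corresponding table value otherwise. -/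
def psi (F : Type*) [Field F] {V : Type*} [LinearOrder V]
    (t : Finset V) (ht : t.card = 4) (b : Finset V) : F × F :=
  ∑ a : Fin 4, ∑ c : Fin 4,
    if a < c ∧ b = {t.orderEmbOfFin ht a, t.orderEmbOfFin ht c} then psiPair F a c else 0

/-- The i-th vertex (in increasing order) of a pentachoron `u`. -/
def pentVert {V : Type*} [LinearOrder V] (u : Finset V) (hu : u.card = 5) (i : Fin 5) : V :=
  u.orderEmbOfFin hu i

/-- The i-th tetrahedral 3-face of a pentachoron `u`: it omits the i-th vertex. -/
def pentFace {V : Type*} [LinearOrder V] (u : Finset V) (hu : u.card = 5) (i : Fin 5) :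
    Finset V :=
  u.erase (pentVert u hu i)

/-- A coloring χ (assigning a pair (x_t, y_t) ∈ F × F to each tetrahedron) is permitted on a
pentachoron `u` if the column of y-values on its five 3-faces equals 𝓡 applied to the column
of x-values. -/
def PermittedOn {V : Type*} [LinearOrder V] {F : Type*} [Field F]
    (u : Finset V) (hu : u.card = 5) (χ : Finset V → F × F) : Prop :=
  ∀ i : Fin 5,
    (χ (pentFace u hu i)).2 = ∑ j : Fin 5, (Rmat i j : F) * (χ (pentFace u hu j)).1

/-- The coloring assigning ψ_{t,b} to every tetrahedron `t`. -/
def Xi (F : Type*) [Field F] {V : Type*} [LinearOrder V] (b : Finset V) :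
    Finset V → F × F :=
  fun t => if ht : t.card = 4 then psi F t ht b else 0


/-- A coloring of ∂Δ⁵ (vertex set `Fin 6`) is permitted if it is permitted on each of the six
pentachora, i.e., on every 5-element subset of the vertices. -/
def Permitted {F : Type*} [Field F] (χ : Finset (Fin 6) → F × F) : Prop :=
  ∀ (u : Finset (Fin 6)) (hu : u.card = 5), PermittedOn u hu χ

lemma card_erase6 (i : Fin 6) : ((univ : Finset (Fin 6)).erase i).card = 5 := by
  rw [Finset.card_erase_of_mem (mem_univ i)]
  simp

/-- `xv F χ i j` is the x-value of the coloring χ on the j-th 3-face (the one omitting the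
j-th smallest vertex) of the pentachoron u_i = {1,…,6} ∖ {i} of ∂Δ⁵; for the pentachoron
u_i this gives the substitutions a = xv i 0, b = xv i 1, c = xv i 2, d = xv i 3,
e = xv i 4. -/
def xv (F : Type*) [Field F] (χ : Finset (Fin 6) → F × F) (i : Fin 6) (j : Fin 5) : F :=
  (χ (pentFace ((univ : Finset (Fin 6)).erase i) (card_erase6 i) j)).1

-- auxiliary lemmas

lemma vl0 : ⇑(((univ : Finset (Fin 6)).erase 0).orderEmbOfFin (card_erase6 0)) = ![1,2,3,4,5] :=
  (Finset.orderEmbOfFin_unique (card_erase6 0) (fun x => by fin_cases x <;> decide)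
    (fun a b hab => by fin_cases a <;> fin_cases b <;> simp_all <;> decide)).symm

lemma vl1 : ⇑(((univ : Finset (Fin 6)).erase 1).orderEmbOfFin (card_erase6 1)) = ![0,2,3,4,5] :=
  (Finset.orderEmbOfFin_unique (card_erase6 1) (fun x => by fin_cases x <;> decide)
    (fun a b hab => by fin_cases a <;> fin_cases b <;> simp_all <;> decide)).symm

lemma vl2 : ⇑(((univ : Finset (Fin 6)).erase 2).orderEmbOfFin (card_erase6 2)) = ![0,1,3,4,5] :=
  (Finset.orderEmbOfFin_unique (card_erase6 2) (fun x => by fin_cases x <;> decide)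
    (fun a b hab => by fin_cases a <;> fin_cases b <;> simp_all <;> decide)).symm

lemma vl3 : ⇑(((univ : Finset (Fin 6)).erase 3).orderEmbOfFin (card_erase6 3)) = ![0,1,2,4,5] :=
  (Finset.orderEmbOfFin_unique (card_erase6 3) (fun x => by fin_cases x <;> decide)
    (fun a b hab => by fin_cases a <;> fin_cases b <;> simp_all <;> decide)).symm

lemma vl4 : ⇑(((univ : Finset (Fin 6)).erase 4).orderEmbOfFin (card_erase6 4)) = ![0,1,2,3,5] :=
  (Finset.orderEmbOfFin_unique (card_erase6 4) (fun x => by fin_cases x <;> decide)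
    (fun a b hab => by fin_cases a <;> fin_cases b <;> simp_all <;> decide)).symm

lemma vl5 : ⇑(((univ : Finset (Fin 6)).erase 5).orderEmbOfFin (card_erase6 5)) = ![0,1,2,3,4] :=
  (Finset.orderEmbOfFin_unique (card_erase6 5) (fun x => by fin_cases x <;> decide)
    (fun a b hab => by fin_cases a <;> fin_cases b <;> simp_all <;> decide)).symm

lemma fl0_0 : pentFace ((univ : Finset (Fin 6)).erase 0) (card_erase6 0) 0 = ({2,3,4,5} : Finset (Fin 6)) := by
  rw [pentFace, pentVert, vl0]; decide

lemma fl0_1 : pentFace ((univ : Finset (Fin 6)).erase 0) (card_erase6 0) 1 = ({1,3,4,5} : Finset (Fin 6)) := by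
  rw [pentFace, pentVert, vl0]; decide

lemma fl0_2 : pentFace ((univ : Finset (Fin 6)).erase 0) (card_erase6 0) 2 = ({1,2,4,5} : Finset (Fin 6)) := by
  rw [pentFace, pentVert, vl0]; decide

lemma fl0_3 : pentFace ((univ : Finset (Fin 6)).erase 0) (card_erase6 0) 3 = ({1,2,3,5} : Finset (Fin 6)) := by
  rw [pentFace, pentVert, vl0]; decide

lemma fl0_4 : pentFace ((univ : Finset (Fin 6)).erase 0) (card_erase6 0) 4 = ({1,2,3,4} : Finset (Fin 6)) := by
  rw [pentFace, pentVert, vl0]; decide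

lemma fl1_0 : pentFace ((univ : Finset (Fin 6)).erase 1) (card_erase6 1) 0 = ({2,3,4,5} : Finset (Fin 6)) := by
  rw [pentFace, pentVert, vl1]; decide

lemma fl1_1 : pentFace ((univ : Finset (Fin 6)).erase 1) (card_erase6 1) 1 = ({0,3,4,5} : Finset (Fin 6)) := by
  rw [pentFace, pentVert, vl1]; decide

lemma fl1_2 : pentFace ((univ : Finset (Fin 6)).erase 1) (card_erase6 1) 2 = ({0,2,4,5} : Finset (Fin 6)) := by
  rw [pentFace, pentVert, vl1]; decide

lemma fl1_3 : pentFace ((univ : Finset (Fin 6)).erase 1) (card_erase6 1) 3 = ({0,2,3,5} : Finset (Fin 6)) := by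
  rw [pentFace, pentVert, vl1]; decide

lemma fl1_4 : pentFace ((univ : Finset (Fin 6)).erase 1) (card_erase6 1) 4 = ({0,2,3,4} : Finset (Fin 6)) := by
  rw [pentFace, pentVert, vl1]; decide

lemma fl2_0 : pentFace ((univ : Finset (Fin 6)).erase 2) (card_erase6 2) 0 = ({1,3,4,5} : Finset (Fin 6)) := by
  rw [pentFace, pentVert, vl2]; decide

lemma fl2_1 : pentFace ((univ : Finset (Fin 6)).erase 2) (card_erase6 2) 1 = ({0,3,4,5} : Finset (Fin 6)) := by
  rw [pentFace, pentVert, vl2]; decide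

lemma fl2_2 : pentFace ((univ : Finset (Fin 6)).erase 2) (card_erase6 2) 2 = ({0,1,4,5} : Finset (Fin 6)) := by
  rw [pentFace, pentVert, vl2]; decide

lemma fl2_3 : pentFace ((univ : Finset (Fin 6)).erase 2) (card_erase6 2) 3 = ({0,1,3,5} : Finset (Fin 6)) := by
  rw [pentFace, pentVert, vl2]; decide

lemma fl2_4 : pentFace ((univ : Finset (Fin 6)).erase 2) (card_erase6 2) 4 = ({0,1,3,4} : Finset (Fin 6)) := by
  rw [pentFace, pentVert, vl2]; decide

lemma fl3_0 : pentFace ((univ : Finset (Fin 6)).erase 3) (card_erase6 3) 0 = ({1,2,4,5} : Finset (Fin 6)) := by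
  rw [pentFace, pentVert, vl3]; decide

lemma fl3_1 : pentFace ((univ : Finset (Fin 6)).erase 3) (card_erase6 3) 1 = ({0,2,4,5} : Finset (Fin 6)) := by
  rw [pentFace, pentVert, vl3]; decide

lemma fl3_2 : pentFace ((univ : Finset (Fin 6)).erase 3) (card_erase6 3) 2 = ({0,1,4,5} : Finset (Fin 6)) := by
  rw [pentFace, pentVert, vl3]; decide

lemma fl3_3 : pentFace ((univ : Finset (Fin 6)).erase 3) (card_erase6 3) 3 = ({0,1,2,5} : Finset (Fin 6)) := by
  rw [pentFace, pentVert, vl3]; decide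

lemma fl3_4 : pentFace ((univ : Finset (Fin 6)).erase 3) (card_erase6 3) 4 = ({0,1,2,4} : Finset (Fin 6)) := by
  rw [pentFace, pentVert, vl3]; decide

lemma fl4_0 : pentFace ((univ : Finset (Fin 6)).erase 4) (card_erase6 4) 0 = ({1,2,3,5} : Finset (Fin 6)) := by
  rw [pentFace, pentVert, vl4]; decide

lemma fl4_1 : pentFace ((univ : Finset (Fin 6)).erase 4) (card_erase6 4) 1 = ({0,2,3,5} : Finset (Fin 6)) := by
  rw [pentFace, pentVert, vl4]; decide

lemma fl4_2 : pentFace ((univ : Finset (Fin 6)).erase 4) (card_erase6 4) 2 = ({0,1,3,5} : Finset (Fin 6)) := by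
  rw [pentFace, pentVert, vl4]; decide

lemma fl4_3 : pentFace ((univ : Finset (Fin 6)).erase 4) (card_erase6 4) 3 = ({0,1,2,5} : Finset (Fin 6)) := by
  rw [pentFace, pentVert, vl4]; decide

lemma fl4_4 : pentFace ((univ : Finset (Fin 6)).erase 4) (card_erase6 4) 4 = ({0,1,2,3} : Finset (Fin 6)) := by
  rw [pentFace, pentVert, vl4]; decide

lemma fl5_0 : pentFace ((univ : Finset (Fin 6)).erase 5) (card_erase6 5) 0 = ({1,2,3,4} : Finset (Fin 6)) := by
  rw [pentFace, pentVert, vl5]; decide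

lemma fl5_1 : pentFace ((univ : Finset (Fin 6)).erase 5) (card_erase6 5) 1 = ({0,2,3,4} : Finset (Fin 6)) := by
  rw [pentFace, pentVert, vl5]; decide

lemma fl5_2 : pentFace ((univ : Finset (Fin 6)).erase 5) (card_erase6 5) 2 = ({0,1,3,4} : Finset (Fin 6)) := by
  rw [pentFace, pentVert, vl5]; decide

lemma fl5_3 : pentFace ((univ : Finset (Fin 6)).erase 5) (card_erase6 5) 3 = ({0,1,2,4} : Finset (Fin 6)) := by
  rw [pentFace, pentVert, vl5]; decide

lemma fl5_4 : pentFace ((univ : Finset (Fin 6)).erase 5) (card_erase6 5) 4 = ({0,1,2,3} : Finset (Fin 6)) := by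
  rw [pentFace, pentVert, vl5]; decide

set_option maxRecDepth 100000 in
set_option maxHeartbeats 4000000 in
/-- char 3: the alternating cocycle sum of e²+2d²+2bd+ad+c²+bc+2ac over a permitted coloring of ∂Δ⁵ vanishes. -/
theorem statement15 (F : Type*) [Field F] [CharP F 3]
    (χ : Finset (Fin 6) → F × F) (hχ : Permitted χ) :
    ∑ i : Fin 6, (-1 : F) ^ (i : ℕ) *
      (let a := xv F χ i 0; let b := xv F χ i 1; let c := xv F χ i 2;
       let d := xv F χ i 3; let e := xv F χ i 4;
       e^2 + 2*d^2 + 2*b*d + a*d + c^2 + b*c + 2*a*c) = 0 := by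
  have h3 : (3:F) = 0 := CharP.cast_eq_zero F 3
  have e0_0 := hχ ((univ : Finset (Fin 6)).erase 0) (card_erase6 0) 0
  have e0_1 := hχ ((univ : Finset (Fin 6)).erase 0) (card_erase6 0) 1
  have e0_2 := hχ ((univ : Finset (Fin 6)).erase 0) (card_erase6 0) 2
  have e0_3 := hχ ((univ : Finset (Fin 6)).erase 0) (card_erase6 0) 3
  have e0_4 := hχ ((univ : Finset (Fin 6)).erase 0) (card_erase6 0) 4
  have e1_0 := hχ ((univ : Finset (Fin 6)).erase 1) (card_erase6 1) 0
  have e1_1 := hχ ((univ : Finset (Fin 6)).erase 1) (card_erase6 1) 1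
  have e1_2 := hχ ((univ : Finset (Fin 6)).erase 1) (card_erase6 1) 2
  have e1_3 := hχ ((univ : Finset (Fin 6)).erase 1) (card_erase6 1) 3
  have e1_4 := hχ ((univ : Finset (Fin 6)).erase 1) (card_erase6 1) 4
  have e2_0 := hχ ((univ : Finset (Fin 6)).erase 2) (card_erase6 2) 0
  have e2_1 := hχ ((univ : Finset (Fin 6)).erase 2) (card_erase6 2) 1
  have e2_2 := hχ ((univ : Finset (Fin 6)).erase 2) (card_erase6 2) 2
  have e2_3 := hχ ((univ : Finset (Fin 6)).erase 2) (card_erase6 2) 3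
  have e2_4 := hχ ((univ : Finset (Fin 6)).erase 2) (card_erase6 2) 4
  have e3_0 := hχ ((univ : Finset (Fin 6)).erase 3) (card_erase6 3) 0
  have e3_1 := hχ ((univ : Finset (Fin 6)).erase 3) (card_erase6 3) 1
  have e3_2 := hχ ((univ : Finset (Fin 6)).erase 3) (card_erase6 3) 2
  have e3_3 := hχ ((univ : Finset (Fin 6)).erase 3) (card_erase6 3) 3
  have e3_4 := hχ ((univ : Finset (Fin 6)).erase 3) (card_erase6 3) 4
  have e4_0 := hχ ((univ : Finset (Fin 6)).erase 4) (card_erase6 4) 0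
  have e4_1 := hχ ((univ : Finset (Fin 6)).erase 4) (card_erase6 4) 1
  have e4_2 := hχ ((univ : Finset (Fin 6)).erase 4) (card_erase6 4) 2
  have e4_3 := hχ ((univ : Finset (Fin 6)).erase 4) (card_erase6 4) 3
  have e4_4 := hχ ((univ : Finset (Fin 6)).erase 4) (card_erase6 4) 4
  have e5_0 := hχ ((univ : Finset (Fin 6)).erase 5) (card_erase6 5) 0
  have e5_1 := hχ ((univ : Finset (Fin 6)).erase 5) (card_erase6 5) 1
  have e5_2 := hχ ((univ : Finset (Fin 6)).erase 5) (card_erase6 5) 2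
  have e5_3 := hχ ((univ : Finset (Fin 6)).erase 5) (card_erase6 5) 3
  have e5_4 := hχ ((univ : Finset (Fin 6)).erase 5) (card_erase6 5) 4
  simp only [Fin.sum_univ_five, fl0_0, fl0_1, fl0_2, fl0_3, fl0_4, fl1_0, fl1_1, fl1_2, fl1_3, fl1_4, fl2_0, fl2_1, fl2_2, fl2_3, fl2_4, fl3_0, fl3_1, fl3_2, fl3_3, fl3_4, fl4_0, fl4_1, fl4_2, fl4_3, fl4_4, fl5_0, fl5_1, fl5_2, fl5_3, fl5_4, Rmat] at e0_0 e0_1 e0_2 e0_3 e0_4 e1_0 e1_1 e1_2 e1_3 e1_4 e2_0 e2_1 e2_2 e2_3 e2_4 e3_0 e3_1 e3_2 e3_3 e3_4 e4_0 e4_1 e4_2 e4_3 e4_4 e5_0 e5_1 e5_2 e5_3 e5_4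
  norm_num [Matrix.cons_val', Matrix.cons_val_zero, Matrix.cons_val_one, Matrix.cons_val_two, Matrix.cons_val_three, Matrix.cons_val_four, Matrix.head_cons, Matrix.empty_val', Matrix.cons_val_fin_one, Matrix.head_fin_const] at e0_0 e0_1 e0_2 e0_3 e0_4 e1_0 e1_1 e1_2 e1_3 e1_4 e2_0 e2_1 e2_2 e2_3 e2_4 e3_0 e3_1 e3_2 e3_3 e3_4 e4_0 e4_1 e4_2 e4_3 e4_4 e5_0 e5_1 e5_2 e5_3 e5_4
  simp only [show ((0:Fin 6):ℕ)=0 from rfl, show ((1:Fin 6):ℕ)=1 from rfl, show ((2:Fin 6):ℕ)=2 from rfl, show ((3:Fin 6):ℕ)=3 from rfl, show ((4:Fin 6):ℕ)=4 from rfl, show ((5:Fin 6):ℕ)=5 from rfl, xv, fl0_0, fl0_1, fl0_2, fl0_3, fl0_4, fl1_0, fl1_1, fl1_2, fl1_3, fl1_4, fl2_0, fl2_1, fl2_2, fl2_3, fl2_4, fl3_0, fl3_1, fl3_2, fl3_3, fl3_4, fl4_0, fl4_1, fl4_2, fl4_3, fl4_4, fl5_0, fl5_1, fl5_2, fl5_3,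 fl5_4, Fin.sum_univ_six]
  norm_num
  linear_combination ((χ ({0,1,2,5} : Finset (Fin 6))).1 + (χ ({0,1,3,4} : Finset (Fin 6))).1 + (χ ({0,1,4,5} : Finset (Fin 6))).1 + (-1)*(χ ({0,2,3,5} : Finset (Fin 6))).1 + (-1)*(χ ({0,2,4,5} : Finset (Fin 6))).1 + (χ ({1,2,3,5} : Finset (Fin 6))).1 + (-1)*(χ ({1,2,4,5} : Finset (Fin 6))).1 + (χ ({2,3,4,5} : Finset (Fin 6))).1) * e0_0 + ((χ ({0,1,2,5} : Finset (Fin 6))).1 + (-1)*(χ ({0,1,3,4} : Finset (Fin 6))).1 + (χ ({0,1,3,5} : Finset (Fin 6))).1 + (-1)*(χ ({0,1,4,5} : Finset (Fin 6))).1 + (χ ({0,2,3,4} : Finset (Fin 6))).1 + (-1)*(χ ({0,2,3,5} : Finset (Fin 6))).1 + (-1)*(χ ({0,2,4,5} : Finset (Fin 6))).1 + (χ ({0,3,4,5} : Finset (Fin 6))).1 + (-1)*(χ ({1,2,3,4} : Finset (Fin 6))).1 + (χ ({2,3,4,5} : Finset (Fin 6))).1) * e0_1 + ((-1)*(χ ({0,1,3,4}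 : Finset (Fin 6))).1 + (χ ({0,1,4,5} : Finset (Fin 6))).1 + (-1)*(χ ({0,2,3,4} : Finset (Fin 6))).1 + (-1)*(χ ({0,3,4,5} : Finset (Fin 6))).1 + (χ ({1,2,3,4} : Finset (Fin 6))).1) * e0_2 + ((-1)*(χ ({0,1,2,5} : Finset (Fin 6))).1 + (-1)*(χ ({0,1,3,4} : Finset (Fin 6))).1 + (-1)*(χ ({0,1,4,5} : Finset (Fin 6))).1 + (χ ({0,2,3,5} : Finset (Fin 6))).1 + (χ ({0,2,4,5} : Finset (Fin 6))).1 + (-1)*(χ ({1,2,3,5} : Finset (Fin 6))).1 + (χ ({1,2,4,5} : Finset (Fin 6))).1 + (-1)*(χ ({2,3,4,5} : Finset (Fin 6))).1) * e1_0 + ((-1)*(χ ({0,1,2,5} : Finset (Fin 6))).1 + (-1)*(χ ({0,1,3,4} : Finset (Fin 6))).1 + (-1)*(χ ({0,1,3,5} : Finset (Fin 6))).1 + (χ ({0,2,3,5} : Finset (Fin 6))).1 + (χ ({0,2,4,5} : Finset (Fin 6))).1 + (-1)*(χ ({2,3,4,5} : Finset (Fin 6))).1) * e1_1 + ((-1)*(χ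 ({0,1,3,4} : Finset (Fin 6))).1 + (χ ({0,1,4,5} : Finset (Fin 6))).1 + (χ ({0,2,3,4} : Finset (Fin 6))).1 + (-1)*(χ ({0,3,4,5} : Finset (Fin 6))).1 + (-1)*(χ ({1,2,3,4} : Finset (Fin 6))).1) * e1_2 + ((-1)*(χ ({0,1,2,5} : Finset (Fin 6))).1 + (χ ({0,1,3,4} : Finset (Fin 6))).1 + (-1)*(χ ({0,1,3,5} : Finset (Fin 6))).1 + (χ ({0,1,4,5} : Finset (Fin 6))).1 + (-1)*(χ ({0,2,3,4} : Finset (Fin 6))).1 + (χ ({0,2,3,5} : Finset (Fin 6))).1 + (χ ({0,2,4,5} : Finset (Fin 6))).1 + (-1)*(χ ({0,3,4,5} : Finset (Fin 6))).1 + (χ ({1,2,3,4} : Finset (Fin 6))).1 + (-1)*(χ ({2,3,4,5} : Finset (Fin 6))).1) * e2_0 + ((χ ({0,1,2,5} : Finset (Fin 6))).1 + (χ ({0,1,3,4} : Finset (Fin 6))).1 + (χ ({0,1,3,5} : Finset (Fin 6))).1 + (-1)*(χ ({0,2,3,5} : Finset (Fin 6))).1 + (-1)*(χ ({0,2,4,5}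 : Finset (Fin 6))).1 + (χ ({2,3,4,5} : Finset (Fin 6))).1) * e2_1 + ((χ ({0,1,3,4} : Finset (Fin 6))).1 + (-1)*(χ ({0,1,4,5} : Finset (Fin 6))).1 + (χ ({0,2,3,4} : Finset (Fin 6))).1 + (χ ({0,3,4,5} : Finset (Fin 6))).1 + (-1)*(χ ({1,2,3,4} : Finset (Fin 6))).1) * e3_0 + ((χ ({0,1,3,4} : Finset (Fin 6))).1 + (-1)*(χ ({0,1,4,5} : Finset (Fin 6))).1 + (-1)*(χ ({0,2,3,4} : Finset (Fin 6))).1 + (χ ({0,3,4,5} : Finset (Fin 6))).1 + (χ ({1,2,3,4} : Finset (Fin 6))).1) * e3_1 + ((1)*(χ ({1,2,3,4} : Finset (Fin 6))).1*(χ ({1,2,3,4} : Finset (Fin 6))).1 + (1)*(χ ({1,2,3,5} : Finset (Fin 6))).1*(χ ({1,2,3,5} : Finset (Fin 6))).1 + (1)*(χ ({1,2,3,5} : Finset (Fin 6))).1*(χ ({2,3,4,5} : Finset (Fin 6))).1 + (1)*(χ ({1,2,4,5} : Finset (Fin 6))).1*(χ ({1,3,4,5} : Finset (Fin 6))).1 +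 (1)*(χ ({1,2,4,5} : Finset (Fin 6))).1*(χ ({2,3,4,5} : Finset (Fin 6))).1 + (-2)*(χ ({0,2,3,5} : Finset (Fin 6))).1*(χ ({0,3,4,5} : Finset (Fin 6))).1 + (-1)*(χ ({0,2,3,5} : Finset (Fin 6))).1*(χ ({2,3,4,5} : Finset (Fin 6))).1 + (-2)*(χ ({0,2,4,5} : Finset (Fin 6))).1*(χ ({0,3,4,5} : Finset (Fin 6))).1 + (-1)*(χ ({0,2,4,5} : Finset (Fin 6))).1*(χ ({2,3,4,5} : Finset (Fin 6))).1 + (-1)*(χ ({0,1,3,4} : Finset (Fin 6))).1*(χ ({0,1,3,4} : Finset (Fin 6))).1 + (1)*(χ ({0,1,3,5} : Finset (Fin 6))).1*(χ ({0,1,3,5} : Finset (Fin 6))).1 + (1)*(χ ({0,1,3,5} : Finset (Fin 6))).1*(χ ({0,3,4,5} : Finset (Fin 6))).1 + (1)*(χ ({0,1,4,5} : Finset (Fin 6))).1*(χ ({0,3,4,5} : Finset (Fin 6))).1 + (1)*(χ ({0,1,4,5} : Finset (Fin 6))).1*(χ ({1,3,4,5} : Finset (Fin 6))).1 + (-1)*(χ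 ({0,1,2,4} : Finset (Fin 6))).1*(χ ({0,1,2,4} : Finset (Fin 6))).1 + (-1)*(χ ({0,1,2,5} : Finset (Fin 6))).1*(χ ({0,2,4,5} : Finset (Fin 6))).1 + (-1)*(χ ({0,1,4,5} : Finset (Fin 6))).1*(χ ({1,2,4,5} : Finset (Fin 6))).1 + (1)*(χ ({0,1,2,5} : Finset (Fin 6))).1*(χ ({1,2,3,5} : Finset (Fin 6))).1 + (1)*(χ ({0,1,3,5} : Finset (Fin 6))).1*(χ ({1,2,3,5} : Finset (Fin 6))).1 + (-1)*(χ ({0,1,2,4} : Finset (Fin 6))).1*(χ ({0,2,3,4} : Finset (Fin 6))).1 + (1)*(χ ({0,1,3,4} : Finset (Fin 6))).1*(χ ({0,2,3,4} : Finset (Fin 6))).1 + (-2)*(χ ({0,1,3,4} : Finset (Fin 6))).1*(χ ({1,2,3,4} : Finset (Fin 6))).1 + (-1)*(χ ({0,1,2,5} : Finset (Fin 6))).1*(χ ({1,3,4,5} : Finset (Fin 6))).1 + (-1)*(χ ({0,1,2,5} : Finset (Fin 6))).1*(χ ({1,2,3,4} : Finset (Fin 6))).1 + (1)*(χ ({0,1,3,4}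 : Finset (Fin 6))).1*(χ ({2,3,4,5} : Finset (Fin 6))).1 + (-1)*(χ ({0,1,3,4} : Finset (Fin 6))).1*(χ ({1,3,4,5} : Finset (Fin 6))).1 + (1)*(χ ({0,1,3,4} : Finset (Fin 6))).1*(χ ({1,2,4,5} : Finset (Fin 6))).1 + (-1)*(χ ({0,1,4,5} : Finset (Fin 6))).1*(χ ({2,3,4,5} : Finset (Fin 6))).1 + (1)*(χ ({0,2,3,5} : Finset (Fin 6))).1*(χ ({1,3,4,5} : Finset (Fin 6))).1 + (-1)*(χ ({0,2,3,5} : Finset (Fin 6))).1*(χ ({1,2,3,5} : Finset (Fin 6))).1 + (1)*(χ ({0,2,3,5} : Finset (Fin 6))).1*(χ ({1,2,3,4} : Finset (Fin 6))).1 + (1)*(χ ({0,2,4,5} : Finset (Fin 6))).1*(χ ({1,3,4,5} : Finset (Fin 6))).1 + (-1)*(χ ({0,2,4,5} : Finset (Fin 6))).1*(χ ({1,2,3,5} : Finset (Fin 6))).1 + (2)*(χ ({0,2,4,5} : Finset (Fin 6))).1*(χ ({1,2,3,4} : Finset (Fin 6))).1 + (-1)*(χ ({1,2,3,4} : Finset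 (Fin 6))).1*(χ ({1,2,3,5} : Finset (Fin 6))).1 + (-1)*(χ ({1,3,4,5} : Finset (Fin 6))).1*(χ ({2,3,4,5} : Finset (Fin 6))).1 + (-1)*(χ ({1,2,3,4} : Finset (Fin 6))).1*(χ ({2,3,4,5} : Finset (Fin 6))).1 + (1)*(χ ({0,2,3,4} : Finset (Fin 6))).1*(χ ({2,3,4,5} : Finset (Fin 6))).1 + (-1)*(χ ({0,2,3,4} : Finset (Fin 6))).1*(χ ({1,3,4,5} : Finset (Fin 6))).1 + (1)*(χ ({0,2,3,4} : Finset (Fin 6))).1*(χ ({1,2,3,5} : Finset (Fin 6))).1 + (-1)*(χ ({0,2,3,4} : Finset (Fin 6))).1*(χ ({1,2,3,4} : Finset (Fin 6))).1 + (2)*(χ ({0,3,4,5} : Finset (Fin 6))).1*(χ ({2,3,4,5} : Finset (Fin 6))).1 + (-1)*(χ ({0,3,4,5} : Finset (Fin 6))).1*(χ ({1,3,4,5} : Finset (Fin 6))).1 + (1)*(χ ({0,3,4,5} : Finset (Fin 6))).1*(χ ({1,2,3,5} : Finset (Fin 6))).1 + (-2)*(χ ({0,3,4,5} : Finset (Fin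 6))).1*(χ ({1,2,3,4} : Finset (Fin 6))).1 + (1)*(χ ({1,2,3,4} : Finset (Fin 6))).1*(χ ({1,3,4,5} : Finset (Fin 6))).1 + (2)*(χ ({0,1,2,5} : Finset (Fin 6))).1*(χ ({0,3,4,5} : Finset (Fin 6))).1 + (1)*(χ ({0,1,2,5} : Finset (Fin 6))).1*(χ ({0,2,3,4} : Finset (Fin 6))).1 + (-1)*(χ ({0,1,3,4} : Finset (Fin 6))).1*(χ ({0,2,4,5} : Finset (Fin 6))).1 + (-1)*(χ ({0,1,3,4} : Finset (Fin 6))).1*(χ ({0,2,3,5} : Finset (Fin 6))).1 + (1)*(χ ({0,1,4,5} : Finset (Fin 6))).1*(χ ({0,2,3,4} : Finset (Fin 6))).1 + (1)*(χ ({0,2,3,5} : Finset (Fin 6))).1*(χ ({0,2,4,5} : Finset (Fin 6))).1 + (-1)*(χ ({0,2,3,4} : Finset (Fin 6))).1*(χ ({0,2,3,5} : Finset (Fin 6))).1 + (-2)*(χ ({0,2,3,4} : Finset (Fin 6))).1*(χ ({0,2,4,5} : Finset (Fin 6))).1 + (1)*(χ ({0,2,3,4} : Finset (Fin 6))).1*(χ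 ({0,3,4,5} : Finset (Fin 6))).1 + (-1)*(χ ({0,1,2,5} : Finset (Fin 6))).1*(χ ({0,1,4,5} : Finset (Fin 6))).1 + (1)*(χ ({0,1,2,5} : Finset (Fin 6))).1*(χ ({0,1,3,4} : Finset (Fin 6))).1 + (1)*(χ ({0,1,3,4} : Finset (Fin 6))).1*(χ ({0,1,3,5} : Finset (Fin 6))).1 + (-1)*(χ ({0,1,2,4} : Finset (Fin 6))).1*(χ ({0,1,3,4} : Finset (Fin 6))).1 + (1)*(χ ({0,1,2,4} : Finset (Fin 6))).1*(χ ({0,1,4,5} : Finset (Fin 6))).1 + (-1)*(χ ({0,1,2,4} : Finset (Fin 6))).1*(χ ({0,3,4,5} : Finset (Fin 6))).1) * h3
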